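/- Suppose y : [0,∞) → ℝ^{Nd} solves ẏ(t) = -(L ⊗ I_d) y(t) + b(t) where L is the Laplacian of a connected undirected graph and ‖b(t)‖ ≤ C(t+1)^{-τ} with C > 0, τ > 0. Then the disagreement y^⊥(t) := y(t) − (𝟙_N ⊗ I_d) y_avg(t), with y_avg(t) = (1/N) Σ_n y_n(t), converges to 0 as t → ∞. -/

import Mathlib

open Matrix Filter Kronecker

open Finset
private lemma quad_nonneg (N : ℕ) (G : SimpleGraph (Fin N)) [DecidableRel G.Adj]
    (x : Fin N → ℝ) : 0 ≤ x ⬝ᵥ (G.lapMatrix ℝ *ᵥ x) := by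
  have h := (G.posSemidef_lapMatrix ℝ).dotProduct_mulVec_nonneg x
  simpa using h

private lemma quad_pos (N : ℕ) (G : SimpleGraph (Fin N)) [DecidableRel G.Adj] (hG : G.Connected)
    (x : Fin N → ℝ) (hs : ∑ i, x i = 0) (hx : x ≠ 0) :
    0 < x ⬝ᵥ (G.lapMatrix ℝ *ᵥ x) := by
  rcases (quad_nonneg N G x).lt_or_eq with h | h
  · exact h
  · exfalso
    have h0 : Matrix.toLinearMap₂' ℝ (G.lapMatrix ℝ) x x = 0 := by
      rw [Matrix.toLinearMap₂'_apply']; exact h.symm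
    rw [SimpleGraph.lapMatrix_toLinearMap₂'_apply'_eq_zero_iff_forall_reachable] at h0
    apply hx
    funext i
    have hconst : ∀ j, x j = x i := fun j => h0 j i (hG.preconnected j i)
    have hsum : (N : ℝ) * x i = 0 := by
      rw [← hs, Finset.sum_congr rfl fun j _ => hconst j]; simp [mul_comm]
    have hN : (N : ℝ) ≠ 0 := by
      have := i.pos; positivity
    have := mul_eq_zero.mp hsum
    tauto

private lemma exists_gap (N : ℕ) (G : SimpleGraph (Fin N)) [DecidableRel G.Adj] (hG : G.Connected) :
    ∃ lam : ℝ, 0 < lam ∧ ∀ x : Fin N → ℝ, (∑ i, x i = 0) →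
      lam * (∑ i, (x i) ^ 2) ≤ x ⬝ᵥ (G.lapMatrix ℝ *ᵥ x) := by
  classical
  set S : Set (Fin N → ℝ) := {x | (∑ i, x i = 0) ∧ (∑ i, (x i) ^ 2) = 1} with hS
  by_cases hne : S.Nonempty
  · -- compactness
    have hcont : Continuous fun x : Fin N → ℝ => x ⬝ᵥ (G.lapMatrix ℝ *ᵥ x) := by
      simp only [dotProduct, Matrix.mulVec]
      fun_prop
    have hclosed : IsClosed S := by
      apply IsClosed.inter
      · exact isClosed_eq (by fun_prop) continuous_const
      · exact isClosed_eq (by fun_prop) continuous_const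
    have hbdd : Bornology.IsBounded S := by
      apply Bornology.IsBounded.subset (Metric.isBounded_closedBall (x := (0 : Fin N → ℝ)) (r := 1))
      intro x hx
      simp only [Metric.mem_closedBall, dist_zero_right]
      rw [pi_norm_le_iff_of_nonneg zero_le_one]
      intro i
      have h1 : (x i) ^ 2 ≤ 1 := by
        rw [← hx.2]
        exact Finset.single_le_sum (fun j _ => sq_nonneg (x j)) (Finset.mem_univ i)
      rw [Real.norm_eq_abs]
      exact (sq_le_one_iff_abs_le_one (x i)).mp h1
    obtain ⟨x₀, hx₀S, hmin⟩ := (Metric.isCompact_of_isClosed_isBounded hclosed hbdd).exists_isMinOn hne hcont.continuousOn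
    have hx₀ne : x₀ ≠ 0 := by
      intro h0; rw [h0] at hx₀S
      simp [hS] at hx₀S
    refine ⟨x₀ ⬝ᵥ (G.lapMatrix ℝ *ᵥ x₀), quad_pos N G hG x₀ hx₀S.1 hx₀ne, ?_⟩
    intro x hx
    by_cases hx0 : x = 0
    · simp [hx0]
    · set r : ℝ := Real.sqrt (∑ i, (x i) ^ 2) with hr
      have hrpos : 0 < r := by
        apply Real.sqrt_pos.mpr
        rcases (Finset.sum_nonneg fun i _ => sq_nonneg (x i)).lt_or_eq with h | h
        · exact h
        · exfalso; apply hx0; funext i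
          have := (Finset.sum_eq_zero_iff_of_nonneg (fun j _ => sq_nonneg (x j))).mp h.symm i (Finset.mem_univ i)
          have := pow_eq_zero_iff (n := 2) (by norm_num) |>.mp this
          simpa using this
      have hr2 : r ^ 2 = ∑ i, (x i) ^ 2 := Real.sq_sqrt (Finset.sum_nonneg fun i _ => sq_nonneg (x i))
      have hu : (r⁻¹ • x) ∈ S := by
        constructor
        · simp [← Finset.mul_sum, hx]
        · simp only [Pi.smul_apply, smul_eq_mul, mul_pow]
          rw [← Finset.mul_sum, ← hr2]
          field_simp
      have hmin' := hmin hu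
      have hq : (r⁻¹ • x) ⬝ᵥ (G.lapMatrix ℝ *ᵥ (r⁻¹ • x)) = r⁻¹ ^ 2 * (x ⬝ᵥ (G.lapMatrix ℝ *ᵥ x)) := by
        rw [Matrix.mulVec_smul, dotProduct_smul, smul_dotProduct]
        simp [sq, mul_assoc, smul_eq_mul]
      have : x₀ ⬝ᵥ (G.lapMatrix ℝ *ᵥ x₀) ≤ r⁻¹ ^ 2 * (x ⬝ᵥ (G.lapMatrix ℝ *ᵥ x)) := by
        rw [← hq]; exact hmin'
      calc x₀ ⬝ᵥ (G.lapMatrix ℝ *ᵥ x₀) * (∑ i, (x i) ^ 2)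
          ≤ (r⁻¹ ^ 2 * (x ⬝ᵥ (G.lapMatrix ℝ *ᵥ x))) * (∑ i, (x i) ^ 2) := by
            apply mul_le_mul_of_nonneg_right this (Finset.sum_nonneg fun i _ => sq_nonneg (x i))
        _ = x ⬝ᵥ (G.lapMatrix ℝ *ᵥ x) := by
            rw [← hr2]; field_simp
  · refine ⟨1, one_pos, ?_⟩
    intro x hx
    have hx0 : x = 0 := by
      by_contra h0
      apply hne
      set r : ℝ := Real.sqrt (∑ i, (x i) ^ 2) with hr
      have hrpos : 0 < r := by
        apply Real.sqrt_pos.mpr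
        rcases (Finset.sum_nonneg fun i _ => sq_nonneg (x i)).lt_or_eq with h | h
        · exact h
        · exfalso; apply h0; funext i
          have := (Finset.sum_eq_zero_iff_of_nonneg (fun j _ => sq_nonneg (x j))).mp h.symm i (Finset.mem_univ i)
          have := pow_eq_zero_iff (n := 2) (by norm_num) |>.mp this
          simpa using this
      have hr2 : r ^ 2 = ∑ i, (x i) ^ 2 := Real.sq_sqrt (Finset.sum_nonneg fun i _ => sq_nonneg (x i))
      refine ⟨r⁻¹ • x, ?_, ?_⟩
      · simp [← Finset.mul_sum, hx]
      · simp only [Pi.smul_apply, smul_eq_mul, mul_pow]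
        rw [← Finset.mul_sum, ← hr2]
        field_simp
    simp [hx0]
open Matrix Finset Kronecker Filter

/-- For ẏ = -(L ⊗ I_d) y + b with ‖b(t)‖ ≤ C(t+1)^{-τ}, the disagreement
y⊥(t) = y(t) − 𝟙 ⊗ y_avg(t) tends to zero. -/
theorem disagreement_tendsto_zero (N d : ℕ) (hN : 0 < N) (G : SimpleGraph (Fin N))
    [DecidableRel G.Adj] (hG : G.Connected)
    (b : ℝ → (Fin N × Fin d → ℝ)) (hbcont : Continuous b)
    (C tau : ℝ) (hC : 0 < C) (htau : 0 < tau)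
    (hb : ∀ t : ℝ, 0 ≤ t → ‖b t‖ ≤ C * (t + 1) ^ (-tau))
    (y : ℝ → (Fin N × Fin d → ℝ))
    (hy : ∀ t : ℝ, 0 ≤ t → HasDerivAt y
      (-((G.lapMatrix ℝ ⊗ₖ (1 : Matrix (Fin d) (Fin d) ℝ)) *ᵥ y t) + b t) t) :
    Tendsto (fun t => (fun p : Fin N × Fin d =>
        y t p - (1 / (N : ℝ)) * ∑ m : Fin N, y t (m, p.2))) atTop (nhds 0) := by
  classical
  obtain ⟨lam, hlam, hgap⟩ := exists_gap N G hG
  set L : Matrix (Fin N) (Fin N) ℝ := G.lapMatrix ℝ with hL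
  set L' : Matrix (Fin N × Fin d) (Fin N × Fin d) ℝ := L ⊗ₖ (1 : Matrix (Fin d) (Fin d) ℝ) with hL'
  set z : ℝ → (Fin N × Fin d → ℝ) :=
    fun t p => y t p - (1 / (N : ℝ)) * ∑ m : Fin N, y t (m, p.2) with hzdef
  set g : ℝ → ℝ := fun t => ∑ p : Fin N × Fin d, (z t p) ^ 2 with hgdef
  -- basic matrix facts
  have key1 : ∀ (v : Fin N × Fin d → ℝ) (p : Fin N × Fin d),
      (L' *ᵥ v) p = ∑ m, L p.1 m * v (m, p.2) := by
    intro v p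
    simp [hL', mulVec, dotProduct, Fintype.sum_prod_type, Matrix.one_apply, mul_ite, ite_mul,
      Matrix.kroneckerMap_apply]
  have rowsum : ∀ n, ∑ m, L n m = 0 := by
    intro n
    have h := congrFun (G.lapMatrix_mulVec_const_eq_zero (R := ℝ)) n
    simpa [mulVec, dotProduct] using h
  have colsum : ∀ m, ∑ n, L n m = 0 := by
    intro m
    have hsymm : ∀ n, L n m = L m n := fun n => (G.isSymm_lapMatrix (R := ℝ)).apply m n
    rw [Finset.sum_congr rfl fun n _ => hsymm n]
    exact rowsum m
  have hNne : (N : ℝ) ≠ 0 := by positivity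
  have zsum : ∀ t (j : Fin d), ∑ n, z t (n, j) = 0 := by
    intro t j
    simp only [hzdef]
    rw [Finset.sum_sub_distrib, Finset.sum_const, Finset.card_univ, Fintype.card_fin]
    field_simp
    rw [nsmul_eq_mul, mul_div_cancel₀ _ hNne, sub_self]
  have yz : ∀ t p, (L' *ᵥ y t) p = (L' *ᵥ z t) p := by
    intro t p
    rw [key1, key1]
    rw [← sub_eq_zero, ← Finset.sum_sub_distrib]
    have : ∀ m, L p.1 m * y t (m, p.2) - L p.1 m * z t (m, p.2)
        = L p.1 m * ((1 / (N : ℝ)) * ∑ k, y t (k, p.2)) := by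
      intro m; simp only [hzdef]; ring
    rw [Finset.sum_congr rfl fun m _ => this m, ← Finset.sum_mul, rowsum, zero_mul]
  have colzero : ∀ t (j : Fin d), ∑ n, (L' *ᵥ z t) (n, j) = 0 := by
    intro t j
    have : ∀ n : Fin N, (L' *ᵥ z t) (n, j) = ∑ m, L n m * z t (m, j) := fun n => key1 (z t) (n, j)
    rw [Finset.sum_congr rfl fun n _ => this n, Finset.sum_comm]
    rw [Finset.sum_congr rfl (fun m (_ : m ∈ Finset.univ) => (Finset.sum_mul ..).symm)]
    simp [colsum]
  -- derivative of z components
  have hz' : ∀ t, 0 ≤ t → ∀ p, HasDerivAt (fun s => z s p)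
      (-((L' *ᵥ z t) p) + (b t p - (1 / (N : ℝ)) * ∑ m, b t (m, p.2))) t := by
    intro t ht p
    have hq : ∀ q, HasDerivAt (fun s => y s q) ((-(L' *ᵥ y t) + b t) q) t :=
      fun q => hasDerivAt_pi.mp (hy t ht) q
    have h1 : HasDerivAt (fun s => z s p)
        ((-(L' *ᵥ y t) + b t) p - (1 / (N : ℝ)) * ∑ m, (-(L' *ᵥ y t) + b t) (m, p.2)) t :=
      (hq p).sub ((HasDerivAt.fun_sum fun m _ => hq (m, p.2)).const_mul (1 / (N : ℝ)))
    convert h1 using 1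
    have h2 : ∑ m, (-(L' *ᵥ y t) + b t) (m, p.2) = ∑ m, b t (m, p.2) := by
      rw [Finset.sum_congr rfl (fun m _ => by
        show -(L' *ᵥ y t) (m, p.2) + b t (m, p.2) = _
        rw [yz t (m, p.2)]),
        Finset.sum_add_distrib]
      simp only [Finset.sum_neg_distrib]
      rw [colzero t p.2]
      ring
    rw [h2]
    have := yz t p
    simp only [Pi.add_apply, Pi.neg_apply]
    rw [this]
    ring
  -- derivative of g
  set D : ℝ → (Fin N × Fin d → ℝ) := fun t p =>
    -((L' *ᵥ z t) p) + (b t p - (1 / (N : ℝ)) * ∑ m, b t (m, p.2)) with hD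
  have hg' : ∀ t, 0 ≤ t → HasDerivAt g (∑ p : Fin N × Fin d, 2 * z t p * D t p) t := by
    intro t ht
    have h := HasDerivAt.fun_sum (fun p (_ : p ∈ Finset.univ) => (hz' t ht p).pow 2)
    convert h using 1
    case e'_4 => rfl
    case e'_5 => rfl
    case e'_8 => rfl
    apply Finset.sum_congr rfl
    intro p _
    push_cast
    ring
  have hg0 : ∀ t, 0 ≤ g t := fun t => Finset.sum_nonneg fun p _ => sq_nonneg (z t p)
  -- the key differential inequality
  have hbound : ∀ t, 0 ≤ t → (∑ p : Fin N × Fin d, 2 * z t p * D t p)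
      ≤ -lam * g t + (∑ p : Fin N × Fin d, (b t p) ^ 2) / lam := by
    intro t ht
    set Q : ℝ := ∑ p : Fin N × Fin d, z t p * (L' *ᵥ z t) p with hQ
    have hQge : lam * g t ≤ Q := by
      have hQeq : Q = ∑ j : Fin d, (fun n => z t (n, j)) ⬝ᵥ (L *ᵥ fun n => z t (n, j)) := by
        rw [hQ, Fintype.sum_prod_type, Finset.sum_comm]
        apply Finset.sum_congr rfl
        intro j _
        have hj : ∀ n : Fin N, z t (n, j) * (L' *ᵥ z t) (n, j)
            = z t (n, j) * ∑ m, L n m * z t (m, j) :=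
          fun n => by rw [key1 (z t) (n, j)]
        rw [Finset.sum_congr rfl fun n _ => hj n]
        simp only [dotProduct, Matrix.mulVec]
      have hgeq : g t = ∑ j : Fin d, ∑ n : Fin N, (z t (n, j)) ^ 2 := by
        rw [show g t = ∑ p : Fin N × Fin d, z t p ^ 2 from rfl, Fintype.sum_prod_type,
          Finset.sum_comm]
      rw [hQeq, hgeq, Finset.mul_sum]
      apply Finset.sum_le_sum
      intro j _
      exact hgap (fun n => z t (n, j)) (zsum t j)
    have hcross : ∑ p : Fin N × Fin d, z t p * (∑ m, b t (m, p.2)) = 0 := by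
      have hj : ∀ j : Fin d, ∑ n : Fin N, z t (n, j) * (∑ m, b t (m, j)) = 0 := by
        intro j; rw [← Finset.sum_mul, zsum t j, zero_mul]
      rw [Fintype.sum_prod_type, Finset.sum_comm]
      exact Finset.sum_eq_zero fun j _ => hj j
    have hzb : ∀ p : Fin N × Fin d, 2 * (z t p * b t p) ≤ lam * (z t p) ^ 2 + (b t p) ^ 2 / lam := by
      intro p
      rw [← mul_le_mul_iff_right₀ hlam]
      have hb2 : lam * (lam * (z t p) ^ 2 + (b t p) ^ 2 / lam)
          = lam ^ 2 * (z t p) ^ 2 + (b t p) ^ 2 := by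
        field_simp
      rw [hb2]
      nlinarith [sq_nonneg (lam * z t p - b t p)]
    have hsum_zb : ∑ p : Fin N × Fin d, 2 * (z t p * b t p)
        ≤ lam * g t + (∑ p : Fin N × Fin d, (b t p) ^ 2) / lam := by
      calc ∑ p : Fin N × Fin d, 2 * (z t p * b t p)
          ≤ ∑ p : Fin N × Fin d, (lam * (z t p) ^ 2 + (b t p) ^ 2 / lam) :=
            Finset.sum_le_sum fun p _ => hzb p
        _ = lam * g t + (∑ p : Fin N × Fin d, (b t p) ^ 2) / lam := by
            rw [Finset.sum_add_distrib, ← Finset.mul_sum, ← Finset.sum_div]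
    have expand : ∀ p : Fin N × Fin d, 2 * z t p * D t p
        = -2 * (z t p * (L' *ᵥ z t) p) + 2 * (z t p * b t p)
          - (2 / (N : ℝ)) * (z t p * ∑ m, b t (m, p.2)) := by
      intro p; rw [hD]; ring
    calc (∑ p : Fin N × Fin d, 2 * z t p * D t p)
        = -2 * Q + (∑ p : Fin N × Fin d, 2 * (z t p * b t p))
          - (2 / (N : ℝ)) * (∑ p : Fin N × Fin d, z t p * (∑ m, b t (m, p.2))) := by
          rw [Finset.sum_congr rfl fun p _ => expand p, Finset.sum_sub_distrib,
            Finset.sum_add_distrib, ← Finset.mul_sum, ← Finset.mul_sum, ← Finset.mul_sum, hQ]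
      _ ≤ -lam * g t + (∑ p : Fin N × Fin d, (b t p) ^ 2) / lam := by
          rw [hcross, mul_zero, sub_zero]
          nlinarith [hQge, hsum_zb, hg0 t]
  -- decay of the forcing term
  have hBtend : Filter.Tendsto (fun t => (∑ p : Fin N × Fin d, (b t p) ^ 2) / lam) atTop (nhds 0) := by
    have h2 : Filter.Tendsto (fun t : ℝ => (t + 1) ^ (-tau)) atTop (nhds 0) :=
      (tendsto_rpow_neg_atTop htau).comp (tendsto_atTop_add_const_right atTop 1 tendsto_id)
    have h1 : Filter.Tendsto (fun t : ℝ => C * (t + 1) ^ (-tau)) atTop (nhds 0) := by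
      simpa using h2.const_mul C
    have hup : Filter.Tendsto
        (fun t : ℝ => ((N * d : ℕ) : ℝ) * (C * (t + 1) ^ (-tau)) ^ 2 / lam) atTop (nhds 0) := by
      have := ((h1.pow 2).const_mul ((N * d : ℕ) : ℝ)).div_const lam
      simpa using this
    apply squeeze_zero' (g := fun t : ℝ => ((N * d : ℕ) : ℝ) * (C * (t + 1) ^ (-tau)) ^ 2 / lam)
      ?_ ?_ hup
    · filter_upwards with t
      positivity
    · filter_upwards [eventually_ge_atTop (0 : ℝ)] with t ht
      apply div_le_div_of_nonneg_right ?_ hlam.le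
      have hcard : ∀ p : Fin N × Fin d, (b t p) ^ 2 ≤ (C * (t + 1) ^ (-tau)) ^ 2 := by
        intro p
        have h3 : |b t p| ≤ ‖b t‖ := by
          have := norm_le_pi_norm (b t) p
          simpa using this
        have h4 : |b t p| ≤ C * (t + 1) ^ (-tau) := le_trans h3 (hb t ht)
        calc (b t p) ^ 2 = |b t p| ^ 2 := (sq_abs _).symm
          _ ≤ (C * (t + 1) ^ (-tau)) ^ 2 := by
              apply pow_le_pow_left₀ (abs_nonneg _) h4
      calc ∑ p : Fin N × Fin d, (b t p) ^ 2
          ≤ ∑ _p : Fin N × Fin d, (C * (t + 1) ^ (-tau)) ^ 2 :=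
            Finset.sum_le_sum fun p _ => hcard p
        _ = ((N * d : ℕ) : ℝ) * (C * (t + 1) ^ (-tau)) ^ 2 := by
            rw [Finset.sum_const, Finset.card_univ]
            simp [mul_comm]
  -- the epsilon argument
  have claim : ∀ ε : ℝ, 0 < ε → ∀ᶠ t in atTop, g t ≤ ε := by
    intro ε hε
    have hsmall : ∀ᶠ t in atTop, (∑ p : Fin N × Fin d, (b t p) ^ 2) / lam < lam * ε / 2 :=
      hBtend.eventually_lt_const (by positivity)
    obtain ⟨T₀, hT₀⟩ := eventually_atTop.mp hsmall
    set T : ℝ := max T₀ 0 with hT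
    have hTnn : (0 : ℝ) ≤ T := le_max_right _ _
    set h : ℝ → ℝ := fun t => Real.exp (lam * t) * (g t - ε / 2) with hh
    have hderiv : ∀ t, 0 ≤ t → HasDerivAt h
        (Real.exp (lam * t) * lam * (g t - ε / 2)
          + Real.exp (lam * t) * (∑ p : Fin N × Fin d, 2 * z t p * D t p)) t := by
      intro t ht
      have he : HasDerivAt (fun s : ℝ => Real.exp (lam * s)) (Real.exp (lam * t) * lam) t := by
        have h0 : HasDerivAt (fun s : ℝ => lam * s) lam t := by
          simpa using (hasDerivAt_id t).const_mul lam
        exact h0.exp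
      exact he.mul ((hg' t ht).sub_const (ε / 2))
    have hanti : AntitoneOn h (Set.Ici T) := by
      apply antitoneOn_of_deriv_nonpos (convex_Ici T)
      · intro t ht'
        exact (hderiv t (le_trans hTnn ht')).continuousAt.continuousWithinAt
      · intro t ht'
        rw [interior_Ici] at ht'
        exact ((hderiv t (le_trans hTnn (le_of_lt ht'))).differentiableAt).differentiableWithinAt
      · intro t ht'
        rw [interior_Ici] at ht'
        have htnn : (0 : ℝ) ≤ t := le_trans hTnn (le_of_lt ht')
        rw [(hderiv t htnn).deriv]
        have h1 := hbound t htnn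
        have h2 : (∑ p : Fin N × Fin d, (b t p) ^ 2) / lam < lam * ε / 2 :=
          hT₀ t (le_trans (le_max_left _ _) (le_of_lt ht'))
        have hexp : (0 : ℝ) < Real.exp (lam * t) := Real.exp_pos _
        nlinarith [mul_le_mul_of_nonneg_left h1 hexp.le, mul_lt_mul_of_pos_left h2 hexp]
    have hdecay : ∀ t, T ≤ t →
        g t - ε / 2 ≤ Real.exp (lam * T) * (g T + ε / 2) * Real.exp (-(lam * t)) := by
      intro t ht'
      have hht : h t ≤ h T := hanti Set.self_mem_Ici ht' ht'
      have key : Real.exp (lam * t) * (g t - ε / 2)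
          ≤ Real.exp (lam * T) * (g T + ε / 2) := by
        refine le_trans hht ?_
        apply mul_le_mul_of_nonneg_left (by linarith) (Real.exp_pos _).le
      calc g t - ε / 2
          = (Real.exp (lam * t) * (g t - ε / 2)) * Real.exp (-(lam * t)) := by
            rw [mul_comm (Real.exp (lam * t)) _, mul_assoc, ← Real.exp_add]
            simp
        _ ≤ (Real.exp (lam * T) * (g T + ε / 2)) * Real.exp (-(lam * t)) :=
            mul_le_mul_of_nonneg_right key (Real.exp_pos _).le
    have htail : Filter.Tendsto
        (fun t => Real.exp (lam * T) * (g T + ε / 2) * Real.exp (-(lam * t))) atTop (nhds 0) := by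
      have h5 : Filter.Tendsto (fun t : ℝ => Real.exp (-(lam * t))) atTop (nhds 0) := by
        apply Real.tendsto_exp_atBot.comp
        exact Filter.tendsto_neg_atBot_iff.mpr (tendsto_id.const_mul_atTop hlam)
      simpa using h5.const_mul (Real.exp (lam * T) * (g T + ε / 2))
    filter_upwards [eventually_ge_atTop T, htail.eventually_le_const (half_pos hε)] with t h1 h2
    have := hdecay t h1
    linarith
  -- conclude g → 0
  have hgtend : Filter.Tendsto g atTop (nhds 0) := by
    refine tendsto_order.2 ⟨fun a ha => ?_, fun a ha => ?_⟩
    · exact Filter.Eventually.of_forall fun t => lt_of_lt_of_le ha (hg0 t)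
    · filter_upwards [claim (a / 2) (half_pos ha)] with t h5
      linarith
  rw [tendsto_pi_nhds]
  intro p
  have hznorm : ∀ t, ‖z t p‖ ≤ Real.sqrt (g t) := by
    intro t
    rw [Real.norm_eq_abs, ← Real.sqrt_sq_eq_abs]
    exact Real.sqrt_le_sqrt
      (Finset.single_le_sum (fun q _ => sq_nonneg (z t q)) (Finset.mem_univ p))
  have hsq : Filter.Tendsto (fun t => Real.sqrt (g t)) atTop (nhds 0) := by
    have := (Real.continuous_sqrt.continuousAt (x := 0)).tendsto.comp hgtend
    simpa [Function.comp_def] using this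
  have hfin := squeeze_zero_norm hznorm hsq
  simpa using hfin
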